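/- arXiv:2302.00406 — 2 statements merged into one kernel-verified Lean document; each statement's English description precedes it below -/
import Mathlib

section
/- Let $\Phi$ denote the cumulative distribution function of the standard normal distribution, let $\sigma > 0$, let $c_1,\dots,c_n \in \mathbb{R}$, and let $\gamma_{\sigma^2}$ denote the Gaussian measure $N(0,\sigma^2)$ on $\mathbb{R}$. Then $\int_{\mathbb{R}} \prod_{j=1}^{n} \Phi\left(\frac{c_j + w}{\sigma}\right) d\gamma_{\sigma^2}(w) \;\geq\; \prod_{j=1}^{n} \Phi\left(\frac{c_j}{\sqrt{2}\,\sigma}\right)$. -/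
open MeasureTheory ProbabilityTheory
open scoped NNReal ENNReal Real

/-- The cumulative distribution function of the standard normal distribution. -/
noncomputable def stdNormalCDF (z : ℝ) : ℝ := ((gaussianReal 0 1) (Set.Iic z)).toReal


lemma conv_pdf (a b : ℝ) (ha : 0 < a) (hb : 0 < b) (u : ℝ) :
    ∫ w : ℝ, (Real.sqrt (2 * π * a))⁻¹ * Real.exp (-(u + w) ^ 2 / (2 * a)) *
      ((Real.sqrt (2 * π * b))⁻¹ * Real.exp (-w ^ 2 / (2 * b)))
      = (Real.sqrt (2 * π * (a + b)))⁻¹ * Real.exp (-u ^ 2 / (2 * (a + b))) := by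
  have hab : 0 < a + b := by linarith
  set A : ℝ := (a + b) / (2 * a * b) with hA
  have hApos : 0 < A := by positivity
  set B : ℝ := u * b / (a + b) with hB
  set K : ℝ := (Real.sqrt (2 * π * a))⁻¹ * (Real.sqrt (2 * π * b))⁻¹ *
    Real.exp (-u ^ 2 / (2 * (a + b))) with hK
  have h1 : ∀ w : ℝ, (Real.sqrt (2 * π * a))⁻¹ * Real.exp (-(u + w) ^ 2 / (2 * a)) *
      ((Real.sqrt (2 * π * b))⁻¹ * Real.exp (-w ^ 2 / (2 * b)))
      = K * Real.exp (-A * (w + B) ^ 2) := by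
    intro w
    rw [hK]
    rw [show (Real.sqrt (2 * π * a))⁻¹ * Real.exp (-(u + w) ^ 2 / (2 * a)) *
      ((Real.sqrt (2 * π * b))⁻¹ * Real.exp (-w ^ 2 / (2 * b)))
      = (Real.sqrt (2 * π * a))⁻¹ * (Real.sqrt (2 * π * b))⁻¹ *
        (Real.exp (-(u + w) ^ 2 / (2 * a)) * Real.exp (-w ^ 2 / (2 * b))) from by ring]
    rw [← Real.exp_add]
    conv_rhs => rw [mul_assoc, ← Real.exp_add]
    congr 1
    congr 1
    rw [hA, hB]
    field_simp
    ring
  rw [integral_congr_ae (Filter.Eventually.of_forall h1)]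
  rw [integral_const_mul]
  have h2 : ∫ w : ℝ, Real.exp (-A * (w + B) ^ 2) = Real.sqrt (π / A) := by
    rw [show (fun w : ℝ => Real.exp (-A * (w + B) ^ 2))
        = fun w => (fun t => Real.exp (-A * t ^ 2)) (w + B) from rfl]
    rw [integral_add_right_eq_self (fun t => Real.exp (-A * t ^ 2)) B]
    exact integral_gaussian A
  rw [h2, hK]
  have hπ : 0 < π := Real.pi_pos
  rw [show (Real.sqrt (2 * π * a))⁻¹ * (Real.sqrt (2 * π * b))⁻¹ * Real.exp (-u ^ 2 / (2 * (a + b))) * Real.sqrt (π / A)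
    = (Real.sqrt (2 * π * a))⁻¹ * (Real.sqrt (2 * π * b))⁻¹ * Real.sqrt (π / A) * Real.exp (-u ^ 2 / (2 * (a + b))) from by ring]
  congr 1
  rw [← Real.sqrt_inv, ← Real.sqrt_inv, ← Real.sqrt_mul (by positivity), ← Real.sqrt_mul (by positivity), ← Real.sqrt_inv]
  congr 1
  rw [hA]
  field_simp


lemma conv_gaussianPDFReal (v v' : ℝ≥0) (hv : v ≠ 0) (hv' : v' ≠ 0) (u : ℝ) :
    ∫ w : ℝ, gaussianPDFReal 0 v (u + w) * gaussianPDFReal 0 v' w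
      = gaussianPDFReal 0 (v + v') u := by
  have hv0 : (0:ℝ) < v := by positivity
  have hv'0 : (0:ℝ) < v' := by positivity
  simp only [gaussianPDFReal, sub_zero, NNReal.coe_add]
  exact conv_pdf v v' hv0 hv'0 u

lemma integrable_conv_integrand (v v' : ℝ≥0) (u : ℝ) :
    Integrable (fun w : ℝ => gaussianPDFReal 0 v (u + w) * gaussianPDFReal 0 v' w) := by
  have h1 : Integrable (fun w : ℝ => gaussianPDFReal 0 v (u + w)) := by
    simpa [add_comm] using (integrable_gaussianPDFReal 0 v).comp_add_right u
  have h2 : Integrable (gaussianPDFReal 0 v') := integrable_gaussianPDFReal 0 v'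
  refine h2.bdd_mul ((measurable_gaussianPDFReal 0 v).comp
    (measurable_const_add u)).aestronglyMeasurable (c := (Real.sqrt (2 * π * v))⁻¹) (Filter.Eventually.of_forall fun w => ?_)
  rw [Real.norm_eq_abs, abs_of_nonneg (gaussianPDFReal_nonneg 0 v _), gaussianPDFReal]
  have : Real.exp (-(u + w - 0) ^ 2 / (2 * v)) ≤ 1 := by
    rw [Real.exp_le_one_iff, neg_div]
    have : (0:ℝ) ≤ (u + w - 0) ^ 2 / (2 * v) := by positivity
    linarith
  calc (Real.sqrt (2 * π * v))⁻¹ * Real.exp (-(u + w - 0) ^ 2 / (2 * v))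
      ≤ (Real.sqrt (2 * π * v))⁻¹ * 1 := by
        refine mul_le_mul_of_nonneg_left this (by positivity)
    _ = (Real.sqrt (2 * π * v))⁻¹ := mul_one _

lemma lint_conv (v v' : ℝ≥0) (hv : v ≠ 0) (hv' : v' ≠ 0) (c : ℝ) :
    ∫⁻ w, gaussianReal 0 v (Set.Iic (c + w)) ∂(gaussianReal 0 v')
      = gaussianReal 0 (v + v') (Set.Iic c) := by
  have hvv' : v + v' ≠ 0 := by simp [hv]
  have hGmono : Monotone (fun w => gaussianReal 0 v (Set.Iic (c + w))) :=
    fun x y hxy => measure_mono (Set.Iic_subset_Iic.mpr (by linarith))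
  set ind : ℝ → ℝ≥0∞ := (Set.Iic c).indicator (fun _ => 1) with hind
  have hindmeas : Measurable ind := measurable_const.indicator measurableSet_Iic
  set F : ℝ → ℝ → ℝ≥0∞ := fun w u =>
    gaussianPDF 0 v' w * (ind u * gaussianPDF 0 v (u + w)) with hF
  have hFmeas : Measurable (Function.uncurry F) := by
    apply ((measurable_gaussianPDF 0 v').comp measurable_fst).mul
    exact (hindmeas.comp measurable_snd).mul
      ((measurable_gaussianPDF 0 v).comp (measurable_snd.add measurable_fst))
  have hG : ∀ w, gaussianReal 0 v (Set.Iic (c + w)) = ∫⁻ u, ind u * gaussianPDF 0 v (u + w) := by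
    intro w
    rw [gaussianReal_apply 0 hv, ← lintegral_indicator measurableSet_Iic,
      ← lintegral_add_right_eq_self (fun x => (Set.Iic (c + w)).indicator (gaussianPDF 0 v) x) w]
    congr 1
    funext u
    by_cases h : u ≤ c <;>
      simp [Set.indicator_apply, h, hind]
  rw [gaussianReal_of_var_ne_zero 0 hv',
    lintegral_withDensity_eq_lintegral_mul _ (measurable_gaussianPDF 0 v')
      hGmono.measurable]
  calc ∫⁻ w, (gaussianPDF 0 v' * fun w => gaussianReal 0 v (Set.Iic (c + w))) w
      = ∫⁻ w, ∫⁻ u, F w u := by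
        congr 1; funext w
        simp only [Pi.mul_apply, hG w, hF]
        rw [← lintegral_const_mul (gaussianPDF 0 v' w)
          (show Measurable fun u : ℝ => ind u * gaussianPDF 0 v (u + w) from
            hindmeas.mul ((measurable_gaussianPDF 0 v).comp (measurable_add_const w)))]
    _ = ∫⁻ u, ∫⁻ w, F w u := lintegral_lintegral_swap hFmeas.aemeasurable
    _ = ∫⁻ u, ind u * ∫⁻ w, gaussianPDF 0 v (u + w) * gaussianPDF 0 v' w := by
        congr 1; funext u
        rw [← lintegral_const_mul (ind u)
          (show Measurable fun w : ℝ => gaussianPDF 0 v (u + w) * gaussianPDF 0 v' w from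
            ((measurable_gaussianPDF 0 v).comp (measurable_const_add u)).mul
              (measurable_gaussianPDF 0 v'))]
        congr 1; funext w
        simp only [hF]; ring
    _ = ∫⁻ u, ind u * gaussianPDF 0 (v + v') u := by
        congr 1; funext u
        congr 1
        have : ∀ w : ℝ, gaussianPDF 0 v (u + w) * gaussianPDF 0 v' w
            = ENNReal.ofReal (gaussianPDFReal 0 v (u + w) * gaussianPDFReal 0 v' w) := by
          intro w
          rw [gaussianPDF, gaussianPDF, ← ENNReal.ofReal_mul (gaussianPDFReal_nonneg 0 v _)]
        simp_rw [this]
        rw [← ofReal_integral_eq_lintegral_ofReal (integrable_conv_integrand v v' u)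
          (Filter.Eventually.of_forall fun w =>
            mul_nonneg (gaussianPDFReal_nonneg 0 v _) (gaussianPDFReal_nonneg 0 v' _))]
        rw [conv_gaussianPDFReal v v' hv hv' u]
        rfl
    _ = gaussianReal 0 (v + v') (Set.Iic c) := by
        rw [gaussianReal_apply 0 hvv', ← lintegral_indicator measurableSet_Iic]
        congr 1; funext u
        by_cases h : u ≤ c <;> simp [Set.indicator_apply, h, hind]


lemma integrable_of_bounded {μ : Measure ℝ} [IsProbabilityMeasure μ] {f : ℝ → ℝ}
    (hm : Monotone f) (h0 : ∀ x, 0 ≤ f x) (h1 : ∀ x, f x ≤ 1) : Integrable f μ := by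
  refine Integrable.mono' (integrable_const 1) hm.measurable.aestronglyMeasurable ?_
  filter_upwards with x
  rw [Real.norm_eq_abs, abs_of_nonneg (h0 x)]
  exact h1 x

lemma assoc_ineq {μ : Measure ℝ} [IsProbabilityMeasure μ] {f g : ℝ → ℝ}
    (hf : Monotone f) (hg : Monotone g)
    (hf0 : ∀ x, 0 ≤ f x) (hf1 : ∀ x, f x ≤ 1)
    (hg0 : ∀ x, 0 ≤ g x) (hg1 : ∀ x, g x ≤ 1) :
    (∫ x, f x ∂μ) * (∫ x, g x ∂μ) ≤ ∫ x, f x * g x ∂μ := by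
  have hfi : Integrable f μ := integrable_of_bounded hf hf0 hf1
  have hgi : Integrable g μ := integrable_of_bounded hg hg0 hg1
  have hfgi : Integrable (fun x => f x * g x) μ :=
    integrable_of_bounded (fun x y hxy => mul_le_mul (hf hxy) (hg hxy) (hg0 x) (hf0 y))
      (fun x => mul_nonneg (hf0 x) (hg0 x))
      (fun x => mul_le_one₀ (hf1 x) (hg0 x) (hg1 x))
  have h11 : Integrable (fun z : ℝ × ℝ => f z.1 * g z.1) (μ.prod μ) := by
    simpa using hfgi.mul_prod (integrable_const (1:ℝ))
  have h22 : Integrable (fun z : ℝ × ℝ => f z.2 * g z.2) (μ.prod μ) := by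
    simpa using (integrable_const (1:ℝ)).mul_prod hfgi
  have h12 : Integrable (fun z : ℝ × ℝ => f z.1 * g z.2) (μ.prod μ) := hfi.mul_prod hgi
  have h21 : Integrable (fun z : ℝ × ℝ => f z.2 * g z.1) (μ.prod μ) := by
    have := hgi.mul_prod hfi
    simpa [mul_comm] using this
  have key : 0 ≤ ∫ z : ℝ × ℝ, (f z.1 - f z.2) * (g z.1 - g z.2) ∂(μ.prod μ) := by
    refine integral_nonneg fun z => ?_
    show (0:ℝ) ≤ (f z.1 - f z.2) * (g z.1 - g z.2)
    rcases le_total z.1 z.2 with h | h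
    · have := mul_nonneg (neg_nonneg.2 (sub_nonpos.2 (hf h))) (neg_nonneg.2 (sub_nonpos.2 (hg h)))
      nlinarith [this]
    · exact mul_nonneg (sub_nonneg.2 (hf h)) (sub_nonneg.2 (hg h))
  have expand : ∫ z : ℝ × ℝ, (f z.1 - f z.2) * (g z.1 - g z.2) ∂(μ.prod μ)
      = 2 * (∫ x, f x * g x ∂μ) - 2 * ((∫ x, f x ∂μ) * (∫ x, g x ∂μ)) := by
    have hpt : ∀ z : ℝ × ℝ, (f z.1 - f z.2) * (g z.1 - g z.2)
        = f z.1 * g z.1 + f z.2 * g z.2 - (f z.1 * g z.2 + f z.2 * g z.1) := fun z => by ring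
    simp_rw [hpt]
    have hsum1 : Integrable (fun z : ℝ × ℝ => f z.1 * g z.1 + f z.2 * g z.2) (μ.prod μ) :=
      h11.add h22
    have hsum2 : Integrable (fun z : ℝ × ℝ => f z.1 * g z.2 + f z.2 * g z.1) (μ.prod μ) :=
      h12.add h21
    rw [integral_sub hsum1 hsum2, integral_add h11 h22, integral_add h12 h21]
    have e11 : ∫ z : ℝ × ℝ, f z.1 * g z.1 ∂(μ.prod μ) = ∫ x, f x * g x ∂μ := by
      have := integral_prod_mul (μ := μ) (ν := μ) (fun x => f x * g x) (fun _ => (1:ℝ))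
      simpa using this
    have e22 : ∫ z : ℝ × ℝ, f z.2 * g z.2 ∂(μ.prod μ) = ∫ x, f x * g x ∂μ := by
      have := integral_prod_mul (μ := μ) (ν := μ) (fun _ => (1:ℝ)) (fun x => f x * g x)
      simpa using this
    have e12 : ∫ z : ℝ × ℝ, f z.1 * g z.2 ∂(μ.prod μ) = (∫ x, f x ∂μ) * ∫ x, g x ∂μ :=
      integral_prod_mul f g
    have e21 : ∫ z : ℝ × ℝ, f z.2 * g z.1 ∂(μ.prod μ) = (∫ x, f x ∂μ) * ∫ x, g x ∂μ := by
      have := integral_prod_mul (μ := μ) (ν := μ) g f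
      simp only [mul_comm] at this ⊢
      convert this using 2
    rw [e11, e22, e12, e21]
    ring
  linarith [key, expand.symm]

lemma prod_integral_le {μ : Measure ℝ} [IsProbabilityMeasure μ] {ι : Type*}
    (s : Finset ι) (f : ι → ℝ → ℝ)
    (hmono : ∀ j ∈ s, Monotone (f j)) (h0 : ∀ j ∈ s, ∀ x, 0 ≤ f j x)
    (h1 : ∀ j ∈ s, ∀ x, f j x ≤ 1) :
    ∏ j ∈ s, ∫ x, f j x ∂μ ≤ ∫ x, ∏ j ∈ s, f j x ∂μ := by
  classical
  induction s using Finset.cons_induction with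
  | empty => simp
  | cons a s ha ih =>
    have hmono' : ∀ j ∈ s, Monotone (f j) := fun j hj => hmono j (Finset.mem_cons_of_mem hj)
    have h0' : ∀ j ∈ s, ∀ x, 0 ≤ f j x := fun j hj => h0 j (Finset.mem_cons_of_mem hj)
    have h1' : ∀ j ∈ s, ∀ x, f j x ≤ 1 := fun j hj => h1 j (Finset.mem_cons_of_mem hj)
    have hma : Monotone (f a) := hmono a (Finset.mem_cons_self a s)
    have h0a : ∀ x, 0 ≤ f a x := h0 a (Finset.mem_cons_self a s)
    have h1a : ∀ x, f a x ≤ 1 := h1 a (Finset.mem_cons_self a s)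
    have hmonoP : Monotone (fun x => ∏ j ∈ s, f j x) := by
      intro x y hxy
      exact Finset.prod_le_prod (fun j hj => h0' j hj x) (fun j hj => hmono' j hj hxy)
    have h0P : ∀ x, 0 ≤ ∏ j ∈ s, f j x :=
      fun x => Finset.prod_nonneg fun j hj => h0' j hj x
    have h1P : ∀ x, ∏ j ∈ s, f j x ≤ 1 :=
      fun x => Finset.prod_le_one (fun j hj => h0' j hj x) (fun j hj => h1' j hj x)
    rw [Finset.prod_cons]
    calc (∫ x, f a x ∂μ) * ∏ j ∈ s, ∫ x, f j x ∂μ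
        ≤ (∫ x, f a x ∂μ) * ∫ x, ∏ j ∈ s, f j x ∂μ := by
          refine mul_le_mul_of_nonneg_left (ih hmono' h0' h1') ?_
          exact integral_nonneg h0a
      _ ≤ ∫ x, f a x * ∏ j ∈ s, f j x ∂μ :=
          assoc_ineq hma hmonoP h0a h1a h0P h1P
      _ = ∫ x, ∏ j ∈ Finset.cons a s ha, f j x ∂μ := by
          simp_rw [Finset.prod_cons]

lemma gaussianReal_sq_Iic (s : ℝ) (hs : 0 < s) (a : ℝ) :
    (gaussianReal 0 ⟨s ^ 2, sq_nonneg s⟩ : Measure ℝ) (Set.Iic a)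
      = (gaussianReal 0 1 : Measure ℝ) (Set.Iic (a / s)) := by
  have h := gaussianReal_map_const_mul (μ := (0:ℝ)) (v := 1) s
  simp only [mul_zero, mul_one] at h
  show (gaussianReal 0 (NNReal.mk (s ^ 2) (sq_nonneg s)) : Measure ℝ) (Set.Iic a) = _
  rw [← h, Measure.map_apply (measurable_const_mul s) measurableSet_Iic]
  congr 1
  ext x
  simp only [Set.mem_preimage, Set.mem_Iic]
  rw [le_div_iff₀ hs, mul_comm]

lemma stdNormalCDF_eq_sq (s : ℝ) (hs : 0 < s) (a : ℝ) :
    stdNormalCDF (a / s)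
      = ((gaussianReal 0 ⟨s ^ 2, sq_nonneg s⟩ : Measure ℝ) (Set.Iic a)).toReal := by
  rw [stdNormalCDF, gaussianReal_sq_Iic s hs a]

theorem integral_prod_stdNormalCDF_gaussian_ge'
    (σ : ℝ) (hσ : 0 < σ) (n : ℕ) (c : Fin n → ℝ) :
    ∫ w, ∏ j, stdNormalCDF ((c j + w) / σ) ∂(gaussianReal 0 ⟨σ ^ 2, sq_nonneg σ⟩) ≥
      ∏ j, stdNormalCDF (c j / (Real.sqrt 2 * σ)) := by
  set v : ℝ≥0 := ⟨σ ^ 2, sq_nonneg σ⟩ with hvdef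
  have hv : v ≠ 0 := by
    rw [← NNReal.coe_ne_zero]
    show σ ^ 2 ≠ 0
    positivity
  set μ : Measure ℝ := gaussianReal 0 v with hμ
  set f : Fin n → ℝ → ℝ := fun j w => stdNormalCDF ((c j + w) / σ) with hf
  have hfeq : ∀ j w, f j w = ((gaussianReal 0 v : Measure ℝ) (Set.Iic (c j + w))).toReal := by
    intro j w
    rw [hvdef]
    exact stdNormalCDF_eq_sq σ hσ (c j + w)
  have hmono : ∀ j ∈ Finset.univ, Monotone (f j) := by
    intro j _ x y hxy
    rw [hfeq, hfeq]
    exact ENNReal.toReal_mono (measure_ne_top _ _)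
      (measure_mono (Set.Iic_subset_Iic.mpr (by linarith)))
  have h0 : ∀ j ∈ Finset.univ, ∀ x, 0 ≤ f j x := fun j _ x => by
    rw [hfeq]; exact ENNReal.toReal_nonneg
  have h1 : ∀ j ∈ Finset.univ, ∀ x, f j x ≤ 1 := by
    intro j _ x
    rw [hfeq]
    exact ENNReal.toReal_le_of_le_ofReal zero_le_one (by simpa using prob_le_one)
  have hint : ∀ j : Fin n, ∫ w, f j w ∂μ = stdNormalCDF (c j / (Real.sqrt 2 * σ)) := by
    intro j
    have hs2 : (0:ℝ) < Real.sqrt 2 * σ := by positivity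
    have hvv : v + v = ⟨(Real.sqrt 2 * σ) ^ 2, sq_nonneg _⟩ := by
      ext
      show σ ^ 2 + σ ^ 2 = (Real.sqrt 2 * σ) ^ 2
      rw [mul_pow, Real.sq_sqrt (by norm_num : (0:ℝ) ≤ 2)]
      ring
    calc ∫ w, f j w ∂μ
        = ∫ w, ((gaussianReal 0 v : Measure ℝ) (Set.Iic (c j + w))).toReal ∂μ := by
          simp_rw [hfeq]
      _ = (∫⁻ w, (gaussianReal 0 v : Measure ℝ) (Set.Iic (c j + w)) ∂μ).toReal := by
          refine integral_toReal ?_ ?_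
          · exact (Monotone.measurable (fun x y hxy =>
              measure_mono (Set.Iic_subset_Iic.mpr (by linarith)))).aemeasurable
          · filter_upwards with w
            exact measure_lt_top _ _
      _ = ((gaussianReal 0 (v + v) : Measure ℝ) (Set.Iic (c j))).toReal := by
          rw [hμ, lint_conv v v hv hv (c j)]
      _ = stdNormalCDF (c j / (Real.sqrt 2 * σ)) := by
          rw [hvv, ← stdNormalCDF_eq_sq (Real.sqrt 2 * σ) hs2 (c j)]
  have hge := prod_integral_le (μ := μ) Finset.univ f hmono h0 h1
  simp_rw [hint] at hge
  exact hge


/-- **Lower bound for the batch-preference likelihood.** The Gaussian integral of the product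
of probit factors `Φ((cⱼ+w)/σ)` is bounded below by the product of the individual noisy
pairwise-comparison probabilities `Φ(cⱼ/(√2·σ))`. -/
theorem integral_prod_stdNormalCDF_gaussian_ge
    (σ : ℝ) (hσ : 0 < σ) (n : ℕ) (c : Fin n → ℝ) :
    ∫ w, ∏ j, stdNormalCDF ((c j + w) / σ) ∂(gaussianReal 0 ⟨σ ^ 2, sq_nonneg σ⟩) ≥
      ∏ j, stdNormalCDF (c j / (Real.sqrt 2 * σ)) := by
  exact integral_prod_stdNormalCDF_gaussian_ge' σ hσ n c
end

section
/- Let $\mathcal{X}$ be a set and let $k : \mathcal{X} \times \mathcal{X} \to \mathbb{R}$ be a symmetric positive semidefinite kernel. Define the intransitive preference kernel $k_a$ on pairs by $k_a\big((x_i,x_j),(x'_i,x'_j)\big) = k(x_i,x'_i)\,k(x_j,x'_j) - k(x_i,x'_j)\,k(x'_i,x_j)$. Then $k_a$ is a symmetric positive semidefinite kernel on $\mathcal{X} \times \mathcal{X}$: for all $n$, all pairs $(x_1,y_1),\dots,(x_n,y_n) \in \mathcal{X}\times\mathcal{X}$ and all $c_1,\dots,c_n \in \mathbb{R}$, $\sum_{a=1}^n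 \sum_{b=1}^n c_a c_b \, k_a\big((x_a,y_a),(x_b,y_b)\big) \geq 0$. -/
/-- The intransitive preference kernel
`k_a((xᵢ,xⱼ),(xᵢ',xⱼ')) = k(xᵢ,xᵢ')·k(xⱼ,xⱼ') - k(xᵢ,xⱼ')·k(xᵢ',xⱼ)`. -/
def intransPrefKernel {X : Type*} (k : X → X → ℝ) : (X × X) → (X × X) → ℝ :=
  fun p q => k p.1 q.1 * k p.2 q.2 - k p.1 q.2 * k q.1 p.2

open Finset in
/-- Expansion key lemma. -/
lemma key_expand {ι : Type*} [Fintype ι] (v w v' w' : ι → ℝ) :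
    ∑ i, ∑ j, (v i * w j - v j * w i) * (v' i * w' j - v' j * w' i)
      = 2 * ((∑ i, v i * v' i) * (∑ j, w j * w' j)
             - (∑ i, v i * w' i) * (∑ j, v' j * w j)) := by
  have h : ∀ i j : ι,
      (v i * w j - v j * w i) * (v' i * w' j - v' j * w' i)
        = (v i * v' i) * (w j * w' j) - (v i * w' i) * (v' j * w j)
          - (v' i * w i) * (w' j * v j) + (w i * w' i) * (v j * v' j) := by
    intro i j; ring
  simp only [h, Finset.sum_add_distrib, Finset.sum_sub_distrib,
    ← Finset.sum_mul_sum]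
  ring_nf
  rw [show (∑ i, v' i * w i) = ∑ i, w i * v' i by simp [mul_comm],
      show (∑ j, w' j * v j) = ∑ j, v j * w' j by simp [mul_comm]]
  ring

/-- Gram matrices of finitely-psd kernels are PSD, over any fintype. -/
lemma gram_psd {X : Type*} (k : X → X → ℝ)
    (h_symm : ∀ x y, k x y = k y x)
    (h_psd : ∀ (n : ℕ) (x : Fin n → X) (c : Fin n → ℝ),
      0 ≤ ∑ a, ∑ b, c a * c b * k (x a) (x b))
    {ι : Type} [Fintype ι] [DecidableEq ι] (z : ι → X) :
    Matrix.PosSemidef (Matrix.of fun a b => k (z a) (z b)) := by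
  apply Matrix.PosSemidef.of_dotProduct_mulVec_nonneg
  · ext a b
    simp [Matrix.conjTranspose, h_symm (z a) (z b)]
  · intro x
    have e := Fintype.equivFin ι
    have h := h_psd (Fintype.card ι) (z ∘ e.symm) (x ∘ e.symm)
    calc (0:ℝ) ≤ ∑ a, ∑ b, (x ∘ e.symm) a * (x ∘ e.symm) b
          * k ((z ∘ e.symm) a) ((z ∘ e.symm) b) := h
      _ = ∑ a, ∑ b, x a * x b * k (z a) (z b) := by
          rw [← Equiv.sum_comp e.symm (fun a => ∑ b, x a * x b * k (z a) (z b))]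
          exact Finset.sum_congr rfl fun a _ =>
            Equiv.sum_comp e.symm (fun b => x (e.symm a) * x b * k (z (e.symm a)) (z b))
      _ = dotProduct (star x) ((Matrix.of fun a b => k (z a) (z b)).mulVec x) := by
          simp [dotProduct, Matrix.mulVec, dotProduct]
          exact Finset.sum_congr rfl fun a _ => by
            rw [Finset.mul_sum]
            exact Finset.sum_congr rfl fun b _ => by ring

open scoped Matrix MatrixOrder in
lemma psd_exists_B {ι : Type} [Fintype ι] [DecidableEq ι] {A : Matrix ι ι ℝ}
    (hA : A.PosSemidef) : ∃ B : Matrix ι ι ℝ, A = Bᴴ * B := by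
  obtain ⟨X, hX, -, hXX⟩ := CFC.exists_sqrt_of_isSelfAdjoint_of_quasispectrumRestricts
    hA.isHermitian (QuasispectrumRestricts.nnreal_of_nonneg hA.nonneg)
  exact ⟨X, by rw [← Matrix.star_eq_conjTranspose, hX.star_eq, hXX]⟩

/-- **The intransitive preference kernel is symmetric positive semidefinite.** If `k` is a
symmetric positive semidefinite kernel on `X`, then `k_a` is a symmetric positive
semidefinite kernel on `X × X`. -/
theorem intransPrefKernel_symm_posSemidef {X : Type*} (k : X → X → ℝ)
    (h_symm : ∀ x y, k x y = k y x)
    (h_psd : ∀ (n : ℕ) (x : Fin n → X) (c : Fin n → ℝ),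
      0 ≤ ∑ a, ∑ b, c a * c b * k (x a) (x b)) :
    (∀ p q : X × X, intransPrefKernel k p q = intransPrefKernel k q p) ∧
    (∀ (n : ℕ) (p : Fin n → X × X) (c : Fin n → ℝ),
      0 ≤ ∑ a, ∑ b, c a * c b * intransPrefKernel k (p a) (p b)) := by
  constructor
  · intro p q
    simp only [intransPrefKernel]
    rw [h_symm p.1 q.1, h_symm p.2 q.2, h_symm p.1 q.2, h_symm q.1 p.2]
    ring
  · intro n p c
    -- Gram matrix over the 2n points
    set z : (Fin n ⊕ Fin n) → X := Sum.elim (fun a => (p a).1) (fun a => (p a).2) with hz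
    obtain ⟨B, hB⟩ := psd_exists_B
      (gram_psd k h_symm h_psd z)
    set v : Fin n → (Fin n ⊕ Fin n) → ℝ := fun a i => B i (Sum.inl a) with hv
    set w : Fin n → (Fin n ⊕ Fin n) → ℝ := fun a i => B i (Sum.inr a) with hw
    have hk : ∀ u u' : Fin n ⊕ Fin n, k (z u) (z u') = ∑ i, B i u * B i u' := by
      intro u u'
      have := congrFun (congrFun hB u) u'
      simpa [Matrix.mul_apply, Matrix.conjTranspose_apply] using this
    have hxx : ∀ a b, k (p a).1 (p b).1 = ∑ i, v a i * v b i := fun a b =>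
      hk (Sum.inl a) (Sum.inl b)
    have hyy : ∀ a b, k (p a).2 (p b).2 = ∑ i, w a i * w b i := fun a b =>
      hk (Sum.inr a) (Sum.inr b)
    have hxy : ∀ a b, k (p a).1 (p b).2 = ∑ i, v a i * w b i := fun a b =>
      hk (Sum.inl a) (Sum.inr b)
    have hyx : ∀ a b, k (p b).1 (p a).2 = ∑ i, v b i * w a i := fun a b =>
      hk (Sum.inl b) (Sum.inr a)
    have key : ∀ a b, 2 * (c a * c b * intransPrefKernel k (p a) (p b))
        = ∑ i, ∑ j, (c a * (v a i * w a j - v a j * w a i))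
            * (c b * (v b i * w b j - v b j * w b i)) := by
      intro a b
      have h2 := key_expand (v a) (w a) (v b) (w b)
      have : ∑ i, ∑ j, (c a * (v a i * w a j - v a j * w a i))
            * (c b * (v b i * w b j - v b j * w b i))
          = (c a * c b) * ∑ i, ∑ j, (v a i * w a j - v a j * w a i)
            * (v b i * w b j - v b j * w b i) := by
        rw [Finset.mul_sum]
        exact Finset.sum_congr rfl fun i _ => by
          rw [Finset.mul_sum]; exact Finset.sum_congr rfl fun j _ => by ring
      rw [this, h2, intransPrefKernel, hxx, hyy, hxy, hyx]
      ring
    have main : 2 * (∑ a, ∑ b, c a * c b * intransPrefKernel k (p a) (p b))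
        = ∑ i, ∑ j, (∑ a, c a * (v a i * w a j - v a j * w a i))^2 := by
      rw [Finset.mul_sum]
      calc ∑ a, 2 * ∑ b, c a * c b * intransPrefKernel k (p a) (p b)
          = ∑ a, ∑ b, ∑ i, ∑ j, (c a * (v a i * w a j - v a j * w a i))
              * (c b * (v b i * w b j - v b j * w b i)) := by
            refine Finset.sum_congr rfl fun a _ => ?_
            rw [Finset.mul_sum]
            exact Finset.sum_congr rfl fun b _ => key a b
        _ = ∑ a, ∑ i, ∑ b, ∑ j, (c a * (v a i * w a j - v a j * w a i))
              * (c b * (v b i * w b j - v b j * w b i)) :=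
            Finset.sum_congr rfl fun a _ => Finset.sum_comm
        _ = ∑ i, ∑ a, ∑ b, ∑ j, (c a * (v a i * w a j - v a j * w a i))
              * (c b * (v b i * w b j - v b j * w b i)) :=
            Finset.sum_comm
        _ = ∑ i, ∑ a, ∑ j, ∑ b, (c a * (v a i * w a j - v a j * w a i))
              * (c b * (v b i * w b j - v b j * w b i)) :=
            Finset.sum_congr rfl fun i _ => Finset.sum_congr rfl fun a _ =>
              Finset.sum_comm
        _ = ∑ i, ∑ j, ∑ a, ∑ b, (c a * (v a i * w a j - v a j * w a i))
              * (c b * (v b i * w b j - v b j * w b i)) :=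
            Finset.sum_congr rfl fun i _ => Finset.sum_comm
        _ = ∑ i, ∑ j, (∑ a, c a * (v a i * w a j - v a j * w a i))^2 := by
            refine Finset.sum_congr rfl fun i _ => Finset.sum_congr rfl fun j _ => ?_
            rw [sq, Finset.sum_mul_sum Finset.univ Finset.univ]
    have hnn : 0 ≤ ∑ i, ∑ j, (∑ a, c a * (v a i * w a j - v a j * w a i))^2 :=
      Finset.sum_nonneg fun i _ => Finset.sum_nonneg fun j _ => sq_nonneg _
    linarith
end
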